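/- Let c : C → X × X be a correspondence over a field k and Z ⊆ X a closed subset. Then X ∖ G(c, Z) is the largest open subset U ⊆ X such that Z ∩ U ⊆ U is locally c|_U-invariant; that is, Z ∩ (X ∖ G(c,Z)) is locally c|_{X ∖ G(c,Z)}-invariant, and every open U ⊆ X for which Z ∩ U is locally c|_U-invariant is contained in X ∖ G(c, Z). -/

import Mathlib

open AlgebraicGeometry CategoryTheory CategoryTheory.Limits TopologicalSpace Opposite

universe u

/-- A closed subset `Z ⊆ X` is `c`-invariant for a correspondence `c = (c₁, c₂) : C ⟶ X × X`
if `c₁(c₂⁻¹(Z)) ⊆ Z` set-theoretically. -/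
def CorrInvariant {C X : Scheme.{u}} (c₁ c₂ : C ⟶ X) (Z : Set X) : Prop :=
  c₁.base '' (c₂.base ⁻¹' Z) ⊆ Z

/-- `Z ∩ U ⊆ U` is `c|_U`-invariant, where `c|_U : c₁⁻¹(U) ∩ c₂⁻¹(U) → U × U` denotes the
restriction of the correspondence `c = (c₁, c₂)` to an open subset `U ⊆ X`. -/
def CorrRestrictInvariant {C X : Scheme.{u}} (c₁ c₂ : C ⟶ X) (Z U : Set X) : Prop :=
  c₁.base '' ((c₁.base ⁻¹' U ∩ c₂.base ⁻¹' U) ∩ c₂.base ⁻¹' (Z ∩ U)) ⊆ Z ∩ U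

/-- `Z` is locally `c`-invariant: every point of `Z` has an open neighbourhood `U ⊆ X` such
that `Z ∩ U ⊆ U` is `c|_U`-invariant. -/
def CorrLocallyInvariant {C X : Scheme.{u}} (c₁ c₂ : C ⟶ X) (Z : Set X) : Prop :=
  ∀ x ∈ Z, ∃ U : Set X, IsOpen U ∧ x ∈ U ∧ CorrRestrictInvariant c₁ c₂ Z U

/-- `Z ∩ U₀ ⊆ U₀` is locally `c|_{U₀}`-invariant: every point of `Z ∩ U₀` has an open
neighbourhood `U ⊆ U₀` such that `(Z ∩ U₀) ∩ U ⊆ U` is `c|_U`-invariant (the opens of the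
open subscheme `U₀` being exactly the opens of `X` contained in `U₀`). -/
def CorrLocallyInvariantOn {C X : Scheme.{u}} (c₁ c₂ : C ⟶ X) (Z U₀ : Set X) : Prop :=
  ∀ x ∈ Z ∩ U₀, ∃ U : Set X, IsOpen U ∧ U ⊆ U₀ ∧ x ∈ U ∧
    CorrRestrictInvariant c₁ c₂ (Z ∩ U₀) U

/-- `F(c, Z) := c₂⁻¹(Z) ∩ c₁⁻¹(X ∖ Z) ⊆ C`. -/
def corrF {C X : Scheme.{u}} (c₁ c₂ : C ⟶ X) (Z : Set X) : Set C :=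
  c₂.base ⁻¹' Z ∩ c₁.base ⁻¹' (Set.univ \ Z)

/-- `G(c, Z) := ⋃_S cl(c₁(S)) ∩ cl(c₂(S)) ⊆ X`, the union over the irreducible components `S`
of `F(c, Z)` (i.e. the maximal irreducible subsets of `F(c, Z)`). -/
def corrG {C X : Scheme.{u}} (c₁ c₂ : C ⟶ X) (Z : Set X) : Set X :=
  ⋃ S ∈ {S : Set C | Maximal (fun T : Set C => T ⊆ corrF c₁ c₂ Z ∧ IsIrreducible T) S},
    closure (c₁.base '' S) ∩ closure (c₂.base '' S)


section Topology

variable {α : Type*} [TopologicalSpace α]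

/-- Any irreducible subset of `F` is contained in a maximal irreducible subset of `F`. -/
lemma exists_maximal_irred (F T₀ : Set α) (hT₀F : T₀ ⊆ F) (hT₀ : IsIrreducible T₀) :
    ∃ S, Maximal (fun T : Set α => T ⊆ F ∧ IsIrreducible T) S ∧ T₀ ⊆ S := by
  have key : ∀ c ⊆ {T : Set α | T ⊆ F ∧ IsIrreducible T}, IsChain (· ⊆ ·) c → c.Nonempty →
      ∃ ub ∈ {T : Set α | T ⊆ F ∧ IsIrreducible T}, ∀ s ∈ c, s ⊆ ub := by
    intro c hcS hchain hcne
    refine ⟨⋃₀ c, ⟨Set.sUnion_subset fun t ht => (hcS ht).1, ?_, ?_⟩,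
      fun t ht => Set.subset_sUnion_of_mem ht⟩
    · obtain ⟨t, ht⟩ := hcne
      obtain ⟨x, hx⟩ := (hcS ht).2.1
      exact ⟨x, t, ht, hx⟩
    · rintro u v hu hv ⟨z₁, ⟨t₁, ht₁, hz₁⟩, hz₁u⟩ ⟨z₂, ⟨t₂, ht₂, hz₂⟩, hz₂v⟩
      rcases hchain.total ht₁ ht₂ with h | h
      · obtain ⟨z, hzt, hz⟩ := (hcS ht₂).2.2 u v hu hv ⟨z₁, h hz₁, hz₁u⟩ ⟨z₂, hz₂, hz₂v⟩
        exact ⟨z, ⟨t₂, ht₂, hzt⟩, hz⟩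
      · obtain ⟨z, hzt, hz⟩ := (hcS ht₁).2.2 u v hu hv ⟨z₁, hz₁, hz₁u⟩ ⟨z₂, h hz₂, hz₂v⟩
        exact ⟨z, ⟨t₁, ht₁, hzt⟩, hz⟩
  obtain ⟨S, hsub, hS⟩ := zorn_subset_nonempty _ key T₀ ⟨hT₀F, hT₀⟩
  exact ⟨S, hS, hsub⟩

/-- In a noetherian space, a set has finitely many maximal irreducible subsets. -/
lemma finite_maximal_irred [NoetherianSpace α] (F : Set α) :
    {S : Set α | Maximal (fun T : Set α => T ⊆ F ∧ IsIrreducible T) S}.Finite := by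
  have hfin : (irreducibleComponents F).Finite := NoetherianSpace.finite_irreducibleComponents
  apply (hfin.image (fun T => Subtype.val '' T)).subset
  rintro S hS
  obtain ⟨hSF, hSirr⟩ := hS.1
  have hS' : IsIrreducible (Subtype.val ⁻¹' S : Set F) := by
    constructor
    · obtain ⟨s₀, hs₀⟩ := hSirr.1
      exact ⟨⟨s₀, hSF hs₀⟩, hs₀⟩
    · rintro u v hu hv ⟨z₁, hz₁S, hz₁u⟩ ⟨z₂, hz₂S, hz₂v⟩
      obtain ⟨U, hU, rfl⟩ := isOpen_induced_iff.mp hu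
      obtain ⟨V, hV, rfl⟩ := isOpen_induced_iff.mp hv
      obtain ⟨z, hzS, hzU, hzV⟩ := hSirr.2 U V hU hV ⟨z₁, hz₁S, hz₁u⟩ ⟨z₂, hz₂S, hz₂v⟩
      exact ⟨⟨z, hSF hzS⟩, hzS, hzU, hzV⟩
  obtain ⟨M, hM, hSM⟩ := exists_maximal_irred (Set.univ : Set F) _ (Set.subset_univ _) hS'
  have hMirr : Maximal IsIrreducible M :=
    ⟨hM.1.2, fun b hb hle => hM.2 ⟨Set.subset_univ _, hb⟩ hle⟩
  refine ⟨M, hMirr, ?_⟩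
  have h2 : Subtype.val '' M ⊆ F := by rintro _ ⟨z, _, rfl⟩; exact z.2
  have h3 : IsIrreducible (Subtype.val '' M) :=
    hM.1.2.image _ continuous_subtype_val.continuousOn
  have h1 : S ⊆ Subtype.val '' M := fun z hz => ⟨⟨z, hSF hz⟩, hSM hz, rfl⟩
  exact le_antisymm (hS.2 ⟨h2, h3⟩ h1) h1

end Topology

/-- A quasi-compact scheme locally of finite type over a field has noetherian underlying
topological space. -/
lemma noetherianSpace_of_over_field {k : Type u} [Field k] (X : Scheme.{u})
    (sX : X ⟶ Spec (CommRingCat.of k)) [LocallyOfFiniteType sX] [QuasiCompact sX] :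
    NoetherianSpace X := by
  have hk : IsNoetherianRing Γ(Spec (CommRingCat.of k), ⊤) :=
    isNoetherianRing_of_ringEquiv k
      (Scheme.ΓSpecIso (CommRingCat.of k)).symm.commRingCatIsoToRingEquiv
  have hln : IsLocallyNoetherian X := by
    constructor
    intro U
    have hft : (sX.appLE ⊤ U.1 (by simp)).hom.FiniteType :=
      LocallyOfFiniteType.finiteType_of_affine_subset sX
        (isAffineOpen_top _) U.2 (by simp)
    letI := (sX.appLE ⊤ U.1 (by simp)).hom.toAlgebra
    haveI : Algebra.FiniteType Γ(Spec (CommRingCat.of k), ⊤) Γ(X, U.1) := hft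
    exact Algebra.FiniteType.isNoetherianRing Γ(Spec (CommRingCat.of k), ⊤) Γ(X, U.1)
  have hcs : CompactSpace X := by
    constructor
    have := QuasiCompact.isCompact_preimage (f := sX) Set.univ isOpen_univ isCompact_univ
    simpa using this
  haveI : IsNoetherian X := ⟨⟩
  infer_instance

theorem complement_corrG_largest_locally_invariant
    {k : Type u} [Field k]
    (X C : Scheme.{u}) (sX : X ⟶ Spec (CommRingCat.of k)) (sC : C ⟶ Spec (CommRingCat.of k))
    [LocallyOfFiniteType sX] [QuasiCompact sX] [LocallyOfFiniteType sC] [QuasiCompact sC]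
    (c : C ⟶ pullback sX sX)
    (Z : Set X) (hZ : IsClosed Z) :
    CorrLocallyInvariantOn (c ≫ pullback.fst sX sX) (c ≫ pullback.snd sX sX) Z
        (Set.univ \ corrG (c ≫ pullback.fst sX sX) (c ≫ pullback.snd sX sX) Z) ∧
      ∀ U : Set X, IsOpen U →
        CorrLocallyInvariantOn (c ≫ pullback.fst sX sX) (c ≫ pullback.snd sX sX) Z U →
        U ⊆ Set.univ \ corrG (c ≫ pullback.fst sX sX) (c ≫ pullback.snd sX sX) Z := by
  classical
  haveI : NoetherianSpace C := noetherianSpace_of_over_field C sC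
  set c₁ : C ⟶ X := c ≫ pullback.fst sX sX with hc₁
  set c₂ : C ⟶ X := c ≫ pullback.snd sX sX with hc₂
  have hcont₁ : Continuous c₁.base := c₁.base.hom.continuous
  have hcont₂ : Continuous c₂.base := c₂.base.hom.continuous
  set F : Set C := corrF c₁ c₂ Z with hF
  set 𝒮 : Set (Set C) :=
    {S : Set C | Maximal (fun T : Set C => T ⊆ F ∧ IsIrreducible T) S} with h𝒮
  set G : Set X := corrG c₁ c₂ Z with hG
  have hGmem : ∀ {y : X}, y ∈ G ↔ ∃ S ∈ 𝒮,
      y ∈ closure (c₁.base '' S) ∩ closure (c₂.base '' S) := by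
    intro y
    simp only [hG, corrG, Set.mem_iUnion₂]
    exact ⟨fun ⟨S, hS, hy⟩ => ⟨S, hS, hy⟩, fun ⟨S, hS, hy⟩ => ⟨S, hS, hy⟩⟩
  constructor
  · -- Part 1
    intro x hx
    have hfin : 𝒮.Finite := finite_maximal_irred F
    set W : Set C → Set X := fun S =>
      if x ∈ closure (c₁.base '' S) then (closure (c₂.base '' S))ᶜ
      else (closure (c₁.base '' S))ᶜ with hW
    set U : Set X := ⋂ S ∈ 𝒮, W S with hU
    have hUopen : IsOpen U := by
      refine Set.Finite.isOpen_biInter hfin fun S _ => ?_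
      simp only [hW]
      split <;> exact isClosed_closure.isOpen_compl
    have hUG : U ⊆ Set.univ \ G := by
      intro y hy
      refine ⟨trivial, fun hyG => ?_⟩
      obtain ⟨S, hS, hy₁, hy₂⟩ := hGmem.mp hyG
      have := Set.mem_iInter₂.mp hy S hS
      simp only [hW] at this
      split at this
      · exact this hy₂
      · exact this hy₁
    have hxU : x ∈ U := by
      refine Set.mem_iInter₂.mpr fun S hS => ?_
      have hxnG : x ∉ G := hx.2.2
      simp only [hW]
      by_cases h : x ∈ closure (c₁.base '' S)
      · rw [if_pos h]
        intro hx₂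
        exact hxnG (hGmem.mpr ⟨S, hS, h, hx₂⟩)
      · rw [if_neg h]
        exact h
    refine ⟨U, hUopen, hUG, hxU, ?_⟩
    rintro _ ⟨t, ⟨⟨ht₁U, ht₂U⟩, ht₂ZU⟩, rfl⟩
    refine ⟨⟨?_, hUG ht₁U⟩, ht₁U⟩
    by_contra hc₁Z
    have htF : t ∈ F := ⟨ht₂ZU.1.1, trivial, hc₁Z⟩
    obtain ⟨S, hS, htS⟩ := exists_maximal_irred F {t} (Set.singleton_subset_iff.2 htF)
      isIrreducible_singleton
    have htS' : t ∈ S := htS rfl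
    have h₁ : c₁.base t ∈ closure (c₁.base '' S) :=
      subset_closure (Set.mem_image_of_mem _ htS')
    have h₂ : c₂.base t ∈ closure (c₂.base '' S) :=
      subset_closure (Set.mem_image_of_mem _ htS')
    have hw₁ := Set.mem_iInter₂.mp ht₁U S hS
    have hw₂ := Set.mem_iInter₂.mp ht₂U S hS
    simp only [hW] at hw₁ hw₂
    by_cases h : x ∈ closure (c₁.base '' S)
    · rw [if_pos h] at hw₂
      exact hw₂ h₂
    · rw [if_neg h] at hw₁
      exact hw₁ h₁
  · -- Part 2
    intro U hUopen hloc y hyU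
    refine ⟨trivial, fun hyG => ?_⟩
    obtain ⟨S, hS, hy₁, hy₂⟩ := hGmem.mp hyG
    have hSF : S ⊆ F := hS.1.1
    have hyZ : y ∈ Z := by
      have : closure (c₂.base '' S) ⊆ Z := by
        rw [← hZ.closure_eq]
        exact closure_mono fun z hz => by
          obtain ⟨t, htS, rfl⟩ := hz
          exact (hSF htS).1
      exact this hy₂
    obtain ⟨V, hVopen, hVU, hyV, hinv⟩ := hloc y ⟨hyZ, hyU⟩
    obtain ⟨a₁, ha₁V, t₁, ht₁S, ha₁⟩ := mem_closure_iff.mp hy₁ V hVopen hyV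
    obtain ⟨a₂, ha₂V, t₂, ht₂S, ha₂⟩ := mem_closure_iff.mp hy₂ V hVopen hyV
    obtain ⟨t, htS, htV₁, htV₂⟩ := hS.1.2.2 (c₁.base ⁻¹' V) (c₂.base ⁻¹' V)
      (hVopen.preimage hcont₁) (hVopen.preimage hcont₂)
      ⟨t₁, ht₁S, by rw [Set.mem_preimage, ha₁]; exact ha₁V⟩
      ⟨t₂, ht₂S, by rw [Set.mem_preimage, ha₂]; exact ha₂V⟩
    have htF : t ∈ F := hSF htS
    have : c₁.base t ∈ (Z ∩ U) ∩ V :=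
      hinv ⟨t, ⟨⟨htV₁, htV₂⟩, ⟨htF.1, hVU htV₂⟩, htV₂⟩, rfl⟩
    exact htF.2.2 this.1.1
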